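/- Let T be an expanding 2×2 integer matrix and D ⊂ ℤ² a finite digit set. Then F(T,D) is connected if and only if there is a finite sequence t₁, t₂, …, t_s of elements of D such that every element of D occurs among the t_i and t_i − t_{i+1} ∈ F − F for all 1 ≤ i ≤ s−1 (equivalently, each nonzero consecutive difference lies in the neighbor set 𝒩). -/

import Mathlib

open Matrix Pointwise

/-- The canonical cast of an integer vector to a real vector. -/
def castVec {k : ℕ} (d : Fin k → ℤ) : Fin k → ℝ := fun i => (d i : ℝ)

/-- An integer matrix is expanding if all of its (complex) eigenvalues have modulus
greater than one. -/
def IsExpanding {k : ℕ} (T : Matrix (Fin k) (Fin k) ℤ) : Prop :=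
  ∀ μ : ℂ, (T.map (fun a => (a : ℂ))).charpoly.IsRoot μ → 1 < ‖μ‖

open Polynomial


noncomputable def entsum {𝕜 : Type*} [NormedField 𝕜] (M : Matrix (Fin 2) (Fin 2) 𝕜) : ℝ :=
  ∑ i, ∑ j, ‖M i j‖

lemma entsum_nonneg {𝕜 : Type*} [NormedField 𝕜] (M : Matrix (Fin 2) (Fin 2) 𝕜) : 0 ≤ entsum M := by
  refine Finset.sum_nonneg fun i _ => Finset.sum_nonneg fun j _ => ?_
  positivity

lemma mulVec_norm_le {𝕜 : Type*} [NormedField 𝕜] (M : Matrix (Fin 2) (Fin 2) 𝕜) (y : Fin 2 → 𝕜) :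
    ‖M *ᵥ y‖ ≤ entsum M * ‖y‖ := by
  have h0 : 0 ≤ entsum M * ‖y‖ := mul_nonneg (entsum_nonneg M) (norm_nonneg y)
  rw [pi_norm_le_iff_of_nonneg h0]
  intro i
  have : ‖(M *ᵥ y) i‖ ≤ ∑ j, ‖M i j‖ * ‖y‖ := by
    calc ‖∑ j, M i j * y j‖ ≤ ∑ j, ‖M i j * y j‖ := norm_sum_le _ _
    _ ≤ ∑ j, ‖M i j‖ * ‖y‖ := by
        refine Finset.sum_le_sum fun j _ => ?_
        rw [norm_mul]
        exact mul_le_mul_of_nonneg_left (norm_le_pi_norm y j) (norm_nonneg _)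
  refine this.trans ?_
  rw [← Finset.sum_mul]
  refine mul_le_mul_of_nonneg_right ?_ (norm_nonneg y)
  exact Finset.single_le_sum (f := fun i => ∑ j, ‖M i j‖)
    (fun i _ => Finset.sum_nonneg fun j _ => by positivity) (Finset.mem_univ i)

lemma vec_pow_bound (Ac : Matrix (Fin 2) (Fin 2) ℂ) (ν₁ ν₂ : ℂ)
    (hCH : Ac * Ac = (ν₁ + ν₂) • Ac - (ν₁ * ν₂) • 1)
    (ρ : ℝ) (h1 : ‖ν₁‖ ≤ ρ) (h2 : ‖ν₂‖ ≤ ρ) (hρ : 0 < ρ)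
    (K' : ℝ) (hK'0 : 0 ≤ K') (hK' : ∀ y : Fin 2 → ℂ, ‖Ac *ᵥ y - ν₁ • y‖ ≤ K' * ρ * ‖y‖) :
    ∀ (n : ℕ) (x : Fin 2 → ℂ), ‖(Ac ^ n) *ᵥ x‖ ≤ ρ ^ n * (1 + n * K') * ‖x‖ := by
  intro n x
  set v : ℕ → (Fin 2 → ℂ) := fun n => (Ac ^ n) *ᵥ x with hv
  set w : ℕ → (Fin 2 → ℂ) := fun n => v (n + 1) - ν₁ • v n with hw
  have hrec : ∀ n, v (n + 2) = (ν₁ + ν₂) • v (n + 1) - (ν₁ * ν₂) • v n := by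
    intro n
    have : Ac ^ (n + 2) = (ν₁ + ν₂) • Ac ^ (n + 1) - (ν₁ * ν₂) • Ac ^ n := by
      have : Ac ^ (n + 2) = Ac ^ n * (Ac * Ac) := by
        rw [pow_add, pow_two]
      rw [this, hCH, Matrix.mul_sub, _root_.Matrix.mul_smul, _root_.Matrix.mul_smul, mul_one, ← pow_succ]
    simp only [hv, this, Matrix.sub_mulVec, Matrix.smul_mulVec]
  have hwrec : ∀ n, w (n + 1) = ν₂ • w n := by
    intro n
    simp only [hw, hrec n]
    rw [mul_comm ν₁ ν₂]
    simp only [add_smul, smul_smul, smul_sub]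
    abel
  have hwb : ∀ n, ‖w n‖ ≤ ρ ^ n * ‖w 0‖ := by
    intro n
    induction n with
    | zero => simp
    | succ n ih =>
      rw [hwrec n]
      calc ‖ν₂ • w n‖ = ‖ν₂‖ * ‖w n‖ := by rw [norm_smul]
      _ ≤ ρ * (ρ ^ n * ‖w 0‖) := by
          apply mul_le_mul h2 ih (norm_nonneg _) hρ.le
      _ = ρ ^ (n + 1) * ‖w 0‖ := by ring
  have hw0 : ‖w 0‖ ≤ K' * ρ * ‖x‖ := by
    have : w 0 = Ac *ᵥ x - ν₁ • x := by
      simp only [hw, hv, zero_add, pow_one, pow_zero, Matrix.one_mulVec]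
    rw [this]; exact hK' x
  induction n with
  | zero => simp [hv]
  | succ n ih =>
    push_cast
    have hstep : v (n + 1) = ν₁ • v n + w n := by simp [hw]
    calc ‖v (n + 1)‖ ≤ ‖ν₁ • v n‖ + ‖w n‖ := by rw [hstep]; exact norm_add_le _ _
    _ ≤ ρ * ‖v n‖ + ρ ^ n * ‖w 0‖ := by
        refine add_le_add ?_ (hwb n)
        rw [norm_smul]
        exact mul_le_mul_of_nonneg_right h1 (norm_nonneg _)
    _ ≤ ρ * (ρ ^ n * (1 + n * K') * ‖x‖) + ρ ^ n * (K' * ρ * ‖x‖) := by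
        refine add_le_add (mul_le_mul_of_nonneg_left ih hρ.le) ?_
        exact mul_le_mul_of_nonneg_left hw0 (by positivity)
    _ = ρ ^ (n + 1) * (1 + ((n : ℝ) + 1) * K') * ‖x‖ := by ring


open Polynomial


lemma norm_castC (x : Fin 2 → ℝ) : ‖(fun i => ((x i : ℝ) : ℂ))‖ = ‖x‖ := by
  simp [Pi.norm_def, Complex.nnnorm_real]

lemma exists_contracting_power (T : Matrix (Fin 2) (Fin 2) ℤ) (hT : IsExpanding T) :
    (T.map (fun a => (a : ℝ))).det ≠ 0 ∧
    ∃ σ : ℝ, 0 < σ ∧ σ < 1 ∧ ∃ n₀ : ℕ, 0 < n₀ ∧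
      ∀ x : Fin 2 → ℝ, ‖((T.map (fun a => (a : ℝ)))⁻¹ ^ n₀) *ᵥ x‖ ≤ σ ^ n₀ * ‖x‖ := by
  classical
  set Tc : Matrix (Fin 2) (Fin 2) ℂ := T.map (fun a => (a : ℂ)) with hTc
  set p : ℂ[X] := Tc.charpoly with hp
  have hmonic : p.Monic := Tc.charpoly_monic
  have hdeg : p.natDegree = 2 := by
    rw [hp, Matrix.charpoly_natDegree_eq_dim, Fintype.card_fin]
  have hsplits : p.Splits := IsAlgClosed.splits p
  have hcard : p.roots.card = 2 := by
    rw [(Polynomial.splits_iff_card_roots).mp hsplits, hdeg]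
  obtain ⟨μ₁, μ₂, hroots⟩ := Multiset.card_eq_two.mp hcard
  have hroot : ∀ μ ∈ p.roots, 1 < ‖μ‖ := by
    intro μ hμ
    exact hT μ ((Polynomial.mem_roots hmonic.ne_zero).mp hμ)
  have h1 : 1 < ‖μ₁‖ := hroot μ₁ (by rw [hroots]; simp)
  have h2 : 1 < ‖μ₂‖ := hroot μ₂ (by rw [hroots]; simp)
  have hμ₁0 : μ₁ ≠ 0 := by
    intro h; rw [h] at h1; simp at h1; linarith
  have hμ₂0 : μ₂ ≠ 0 := by
    intro h; rw [h] at h2; simp at h2; linarith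
  -- Cayley-Hamilton
  have hfact : p = (X - C μ₁) * (X - C μ₂) := by
    have := hsplits.eq_prod_roots_of_monic hmonic
    rw [hroots] at this
    simpa using this
  have hCHT : (Tc - μ₁ • 1) * (Tc - μ₂ • 1) = 0 := by
    have h0 := Tc.aeval_self_charpoly
    rw [← hp, hfact] at h0
    simpa [Algebra.algebraMap_eq_smul_one] using h0
  -- real inverse
  set Tr : Matrix (Fin 2) (Fin 2) ℝ := T.map (fun a => (a : ℝ)) with hTr
  have hTcTr : Tc = Tr.map (fun r => (r : ℂ)) := by
    rw [hTc, hTr, Matrix.map_map]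
    ext i j
    simp [Function.comp]
  have hdetTc : Tc.det = μ₁ * μ₂ := by
    rw [hp] at hroots
    rw [Matrix.det_eq_prod_roots_charpoly, hroots]
    simp
  have hdetTc0 : Tc.det ≠ 0 := by
    rw [hdetTc]; exact mul_ne_zero hμ₁0 hμ₂0
  have hdetTr : Tr.det ≠ 0 := by
    intro h
    apply hdetTc0
    rw [hTcTr]
    have : ((Tr.map fun r => (r : ℂ)).det) = Complex.ofRealHom Tr.det :=
      (RingHom.map_det Complex.ofRealHom Tr).symm
    rw [this, h]
    simp
  set A : Matrix (Fin 2) (Fin 2) ℝ := Tr⁻¹ with hA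
  have hTrA : Tr * A = 1 := Matrix.mul_nonsing_inv Tr (isUnit_iff_ne_zero.mpr hdetTr)
  have hATr : A * Tr = 1 := Matrix.nonsing_inv_mul Tr (isUnit_iff_ne_zero.mpr hdetTr)
  set Ac : Matrix (Fin 2) (Fin 2) ℂ := A.map (fun r => (r : ℂ)) with hAc
  have hTcAc : Tc * Ac = 1 := by
    rw [hTcTr, hAc]
    rw [show (fun r : ℝ => (r:ℂ)) = ⇑Complex.ofRealHom from rfl]
    rw [← Matrix.map_mul, hTrA, Matrix.map_one _ (map_zero _) (map_one _)]
  have hAcTc : Ac * Tc = 1 := by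
    rw [hTcTr, hAc]
    rw [show (fun r : ℝ => (r:ℂ)) = ⇑Complex.ofRealHom from rfl]
    rw [← Matrix.map_mul, hATr, Matrix.map_one _ (map_zero _) (map_one _)]
  -- quadratic relation for Ac
  have hCHA : Ac * Ac = (μ₁⁻¹ + μ₂⁻¹) • Ac - (μ₁⁻¹ * μ₂⁻¹) • 1 := by
    have hexp : Tc * Tc - (μ₁ + μ₂) • Tc + (μ₁ * μ₂) • 1 = 0 := by
      have := hCHT
      rw [Matrix.sub_mul, Matrix.mul_sub, Matrix.mul_sub] at this
      rw [Matrix.smul_mul, Matrix.mul_smul, Matrix.smul_mul, Matrix.mul_smul] at this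
      simp only [Matrix.one_mul, Matrix.mul_one, smul_smul] at this
      rw [← this]
      simp only [add_smul]
      abel
    have key : (1 : Matrix (Fin 2) (Fin 2) ℂ) - (μ₁ + μ₂) • Ac + (μ₁ * μ₂) • (Ac * Ac) = 0 := by
      have := congrArg (fun M => M * (Ac * Ac)) hexp
      simp only [Matrix.add_mul, Matrix.sub_mul, Matrix.smul_mul, Matrix.zero_mul,
        Matrix.one_mul] at this
      have e1 : Tc * Tc * (Ac * Ac) = 1 := by
        rw [show Tc * Tc * (Ac * Ac) = Tc * (Tc * Ac) * Ac by noncomm_ring, hTcAc,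
          Matrix.mul_one, hTcAc]
      have e2 : Tc * (Ac * Ac) = Ac := by
        rw [show Tc * (Ac * Ac) = (Tc * Ac) * Ac by noncomm_ring, hTcAc, Matrix.one_mul]
      rw [e1, e2] at this
      exact this
    have hμμ : (μ₁ * μ₂) ≠ 0 := mul_ne_zero hμ₁0 hμ₂0
    have e3 : (μ₁ * μ₂) • (Ac * Ac) = (μ₁ + μ₂) • Ac - 1 := by
      rw [eq_sub_iff_add_eq, ← sub_eq_zero, ← key]
      abel
    refine smul_right_injective _ hμμ ?_
    show (μ₁ * μ₂) • (Ac * Ac) = (μ₁ * μ₂) • ((μ₁⁻¹ + μ₂⁻¹) • Ac - (μ₁⁻¹ * μ₂⁻¹) • 1)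
    rw [e3, smul_sub, smul_smul, smul_smul]
    have s1 : μ₁ * μ₂ * (μ₁⁻¹ + μ₂⁻¹) = μ₁ + μ₂ := by field_simp; ring
    have s2 : μ₁ * μ₂ * (μ₁⁻¹ * μ₂⁻¹) = 1 := by field_simp
    rw [s1, s2, one_smul]
  -- contraction ratio
  set ρ : ℝ := max (max (‖μ₁⁻¹‖) (‖μ₂⁻¹‖)) (1/2) with hρdef
  have hρpos : 0 < ρ := lt_of_lt_of_le (by norm_num) (le_max_right _ _)
  have habs1 : ‖μ₁⁻¹‖ < 1 := by
    rw [norm_inv]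
    exact inv_lt_one_of_one_lt₀ h1
  have habs2 : ‖μ₂⁻¹‖ < 1 := by
    rw [norm_inv]
    exact inv_lt_one_of_one_lt₀ h2
  have hρ1 : ρ < 1 := by
    apply max_lt (max_lt habs1 habs2) (by norm_num)
  have hb1 : ‖μ₁⁻¹‖ ≤ ρ := le_trans (le_max_left _ _) (le_max_left _ _)
  have hb2 : ‖μ₂⁻¹‖ ≤ ρ := le_trans (le_max_right _ _) (le_max_left _ _)
  set K' : ℝ := (entsum Ac + 1) / ρ with hK'def
  have hent := entsum_nonneg Ac
  have hK'0 : 0 ≤ K' := by positivity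
  have hK'ρ : K' * ρ = entsum Ac + 1 := by
    rw [hK'def, div_mul_cancel₀ _ (ne_of_gt hρpos)]
  have hK' : ∀ y : Fin 2 → ℂ, ‖Ac *ᵥ y - μ₁⁻¹ • y‖ ≤ K' * ρ * ‖y‖ := by
    intro y
    rw [hK'ρ]
    calc ‖Ac *ᵥ y - μ₁⁻¹ • y‖ ≤ ‖Ac *ᵥ y‖ + ‖μ₁⁻¹ • y‖ := norm_sub_le _ _
    _ ≤ entsum Ac * ‖y‖ + 1 * ‖y‖ := by
        refine add_le_add (mulVec_norm_le Ac y) ?_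
        rw [norm_smul]
        refine mul_le_mul_of_nonneg_right ?_ (norm_nonneg _)
        exact le_of_lt habs1
    _ = (entsum Ac + 1) * ‖y‖ := by ring
  have Bn := vec_pow_bound Ac μ₁⁻¹ μ₂⁻¹ hCHA ρ hb1 hb2 hρpos K' hK'0 hK'
  set σ : ℝ := (1 + ρ) / 2 with hσdef
  have hσpos : 0 < σ := by positivity
  have hσ1 : σ < 1 := by rw [hσdef]; linarith
  set δ : ℝ := (1 - ρ) / (2 * ρ) with hδdef
  have hδpos : 0 < δ := by
    apply div_pos (by linarith) (by linarith)
  have hσρδ : σ = ρ * (1 + δ) := by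
    rw [hσdef, hδdef]
    field_simp
    ring
  set m : ℕ := max 1 ⌈2 * K' / δ ^ 2⌉₊ with hmdef
  set n₀ : ℕ := 2 * m with hn₀def
  have hm1 : 1 ≤ m := le_max_left _ _
  have hn₀pos : 0 < n₀ := by omega
  have hmK : 2 * K' ≤ (m : ℝ) * δ ^ 2 := by
    have h1 : 2 * K' / δ ^ 2 ≤ (⌈2 * K' / δ ^ 2⌉₊ : ℝ) := Nat.le_ceil _
    have h2 : (⌈2 * K' / δ ^ 2⌉₊ : ℝ) ≤ (m : ℝ) := by
      exact_mod_cast Nat.cast_le.mpr (le_max_right _ _)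
    have h3 : 2 * K' / δ ^ 2 ≤ (m : ℝ) := le_trans h1 h2
    calc 2 * K' = (2 * K' / δ ^ 2) * δ ^ 2 := by field_simp
    _ ≤ (m : ℝ) * δ ^ 2 := by
        apply mul_le_mul_of_nonneg_right h3 (by positivity)
  have hgrowth : (1 : ℝ) + (n₀ : ℝ) * K' ≤ (1 + δ) ^ n₀ := by
    have hber : 1 + (m : ℝ) * δ ≤ (1 + δ) ^ m := one_add_mul_le_pow (by linarith) m
    have hnn : (0:ℝ) ≤ 1 + (m:ℝ) * δ := by positivity
    have hsq : (1 + (m:ℝ) * δ) ^ 2 ≤ ((1 + δ) ^ m) ^ 2 := by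
      apply pow_le_pow_left₀ hnn hber
    have hpow : ((1 + δ) ^ m) ^ 2 = (1 + δ) ^ n₀ := by
      rw [hn₀def, ← pow_mul, mul_comm]
    have hquad : (1:ℝ) + (n₀:ℝ) * K' ≤ (1 + (m:ℝ) * δ) ^ 2 := by
      have : ((n₀ : ℝ)) = 2 * (m : ℝ) := by rw [hn₀def]; push_cast; ring
      rw [this]
      have hm0 : (1:ℝ) ≤ (m:ℝ) := by exact_mod_cast hm1
      nlinarith [hmK, hδpos, hm0]
    linarith [hsq, hpow ▸ hsq, hquad]
  refine ⟨hdetTr, σ, hσpos, hσ1, n₀, hn₀pos, ?_⟩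
  intro x
  set xc : Fin 2 → ℂ := fun i => ((x i : ℝ) : ℂ) with hxc
  have hmapv : (fun i => ((((A ^ n₀) *ᵥ x) i : ℝ) : ℂ)) = (Ac ^ n₀) *ᵥ xc := by
    have hmp : Ac ^ n₀ = (A ^ n₀).map (fun r => (r : ℂ)) := by
      rw [hAc]
      rw [show (fun r : ℝ => (r:ℂ)) = ⇑Complex.ofRealHom from rfl]
      rw [show A.map ⇑Complex.ofRealHom = Complex.ofRealHom.mapMatrix A from rfl]
      rw [show (A ^ n₀).map ⇑Complex.ofRealHom = Complex.ofRealHom.mapMatrix (A ^ n₀) from rfl]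
      rw [map_pow]
    funext i
    rw [hmp]
    exact RingHom.map_mulVec Complex.ofRealHom (A ^ n₀) x i
  have hnx : ‖(A ^ n₀) *ᵥ x‖ = ‖(Ac ^ n₀) *ᵥ xc‖ := by
    rw [← hmapv, norm_castC]
  have hnxc : ‖xc‖ = ‖x‖ := norm_castC x
  calc ‖(A ^ n₀) *ᵥ x‖ = ‖(Ac ^ n₀) *ᵥ xc‖ := hnx
  _ ≤ ρ ^ n₀ * (1 + (n₀:ℝ) * K') * ‖xc‖ := Bn n₀ xc
  _ = ρ ^ n₀ * (1 + (n₀:ℝ) * K') * ‖x‖ := by rw [hnxc]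
  _ ≤ σ ^ n₀ * ‖x‖ := by
      apply mul_le_mul_of_nonneg_right ?_ (norm_nonneg x)
      rw [hσρδ, mul_pow]
      apply mul_le_mul_of_nonneg_left hgrowth (by positivity)


lemma exists_good_norm (T : Matrix (Fin 2) (Fin 2) ℤ) (hT : IsExpanding T) :
    ∃ (N : (Fin 2 → ℝ) → ℝ) (ρ c : ℝ), 0 < ρ ∧ ρ < 1 ∧
      (∀ x, ‖x‖ ≤ N x) ∧ (∀ x, N x ≤ c * ‖x‖) ∧
      (∀ x y, N (x + y) ≤ N x + N y) ∧ (∀ x, N (-x) = N x) ∧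
      (∀ x, N ((T.map (fun a => (a : ℝ)))⁻¹ *ᵥ x) ≤ ρ * N x) := by
  obtain ⟨hdet, σ, hσ0, hσ1, n₀, hn₀, hcon⟩ := exists_contracting_power T hT
  set A : Matrix (Fin 2) (Fin 2) ℝ := (T.map (fun a => (a : ℝ)))⁻¹ with hA
  have hR : (Finset.range n₀).Nonempty := Finset.nonempty_range_iff.mpr (Nat.pos_iff_ne_zero.mp hn₀)
  set N : (Fin 2 → ℝ) → ℝ := fun x => (Finset.range n₀).sup' hR (fun n => ‖(A ^ n) *ᵥ x‖ / σ ^ n)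
    with hN
  have hterm0 : ∀ x : Fin 2 → ℝ, ‖(A ^ 0) *ᵥ x‖ / σ ^ 0 = ‖x‖ := by
    intro x
    simp [Matrix.one_mulVec]
  refine ⟨N, σ, (Finset.range n₀).sup' hR (fun n => entsum (A ^ n) / σ ^ n), hσ0, hσ1, ?_, ?_, ?_, ?_, ?_⟩
  · intro x
    have := Finset.le_sup' (fun n => ‖(A ^ n) *ᵥ x‖ / σ ^ n)
      (Finset.mem_range.mpr hn₀)
    rw [hterm0 x] at this
    exact this
  · intro x
    apply Finset.sup'_le
    intro n hn
    calc ‖(A ^ n) *ᵥ x‖ / σ ^ n ≤ (entsum (A ^ n) * ‖x‖) / σ ^ n := by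
          gcongr
          exact mulVec_norm_le _ x
    _ = (entsum (A ^ n) / σ ^ n) * ‖x‖ := by ring
    _ ≤ ((Finset.range n₀).sup' hR (fun n => entsum (A ^ n) / σ ^ n)) * ‖x‖ := by
          apply mul_le_mul_of_nonneg_right (Finset.le_sup' _ hn) (norm_nonneg x)
  · intro x y
    apply Finset.sup'_le
    intro n hn
    calc ‖(A ^ n) *ᵥ (x + y)‖ / σ ^ n ≤ (‖(A ^ n) *ᵥ x‖ + ‖(A ^ n) *ᵥ y‖) / σ ^ n := by
          gcongr
          rw [Matrix.mulVec_add]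
          exact norm_add_le _ _
    _ = ‖(A ^ n) *ᵥ x‖ / σ ^ n + ‖(A ^ n) *ᵥ y‖ / σ ^ n := by ring
    _ ≤ N x + N y :=
      add_le_add (Finset.le_sup' (fun k => ‖(A ^ k) *ᵥ x‖ / σ ^ k) hn)
        (Finset.le_sup' (fun k => ‖(A ^ k) *ᵥ y‖ / σ ^ k) hn)
  · intro x
    apply Finset.sup'_congr hR rfl
    intro n _
    rw [Matrix.mulVec_neg, norm_neg]
  · intro x
    apply Finset.sup'_le
    intro n hn
    have hmm : (A ^ n) *ᵥ (A *ᵥ x) = (A ^ (n + 1)) *ᵥ x := by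
      rw [Matrix.mulVec_mulVec, ← pow_succ]
    rw [hmm]
    rcases Nat.lt_or_ge (n + 1) n₀ with hlt | hge
    · have : ‖(A ^ (n + 1)) *ᵥ x‖ / σ ^ n = σ * (‖(A ^ (n + 1)) *ᵥ x‖ / σ ^ (n + 1)) := by
        rw [pow_succ]
        field_simp
        ring
      rw [this]
      exact mul_le_mul_of_nonneg_left
        (Finset.le_sup' (fun k => ‖(A ^ k) *ᵥ x‖ / σ ^ k) (Finset.mem_range.mpr hlt)) hσ0.le
    · have hn' : n + 1 = n₀ := by
        have := Finset.mem_range.mp hn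
        omega
      calc ‖(A ^ (n + 1)) *ᵥ x‖ / σ ^ n ≤ (σ ^ (n + 1) * ‖x‖) / σ ^ n := by
            gcongr
            rw [hn']
            exact hcon x
      _ = σ * ‖x‖ := by
            rw [pow_succ]
            field_simp
      _ ≤ σ * N x := by
            apply mul_le_mul_of_nonneg_left ?_ hσ0.le
            have := Finset.le_sup' (fun n => ‖(A ^ n) *ᵥ x‖ / σ ^ n)
              (Finset.mem_range.mpr hn₀)
            rw [hterm0 x] at this
            exact this



lemma chain_mem {α : Type*} {R : α → α → Prop} {P : α → Prop} (h : ∀ x y, R x y → P y) :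
    ∀ {l : List α} {a : α}, List.Chain R a l → ∀ x ∈ l, P x := by
  intro l
  induction l with
  | nil => intro a _ x hx; simp at hx
  | cons b t ih =>
    intro a hc x hx
    change List.IsChain R (a :: b :: t) at hc
    rw [List.isChain_cons_cons] at hc
    rcases List.mem_cons.mp hx with rfl | hx
    · exact h _ _ hc.1
    · exact ih hc.2 x hx

lemma chain_reach {α : Type*} {R : α → α → Prop} :
    ∀ {l : List α} {a : α}, List.Chain R a l → ∀ x ∈ l, Relation.ReflTransGen R a x := by
  intro l
  induction l with
  | nil => intro a _ x hx; simp at hx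
  | cons b t ih =>
    intro a hc x hx
    change List.IsChain R (a :: b :: t) at hc
    rw [List.isChain_cons_cons] at hc
    rcases List.mem_cons.mp hx with rfl | hx
    · exact Relation.ReflTransGen.single hc.1
    · exact (Relation.ReflTransGen.single hc.1).trans (ih hc.2 x hx)

lemma chain'_reachable {α : Type*} {R : α → α → Prop} (hsymm : Symmetric R)
    (L : List α) (hL : L.Chain' R) {a b : α} (ha : a ∈ L) (hb : b ∈ L) :
    Relation.ReflTransGen R a b := by
  cases L with
  | nil => simp at ha
  | cons c t =>
    have hch : List.Chain R c t := hL
    have hca : Relation.ReflTransGen R c a := by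
      rcases List.mem_cons.mp ha with rfl | ha
      · exact Relation.ReflTransGen.refl
      · exact chain_reach hch a ha
    have hcb : Relation.ReflTransGen R c b := by
      rcases List.mem_cons.mp hb with rfl | hb
      · exact Relation.ReflTransGen.refl
      · exact chain_reach hch b hb
    exact (letI : Std.Symm R := ⟨fun _ _ h => hsymm h⟩; Std.Symm.symm _ _ hca).trans hcb

lemma chain'_strengthen {α : Type*} {R : α → α → Prop} {P : α → Prop} :
    ∀ (L : List α), L.Chain' R → (∀ x ∈ L, P x) →
      L.Chain' (fun a b => P a ∧ P b ∧ R a b) := by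
  intro L
  induction L with
  | nil => intro _ _; exact List.isChain_nil
  | cons a l ih =>
    intro hc hP
    change List.IsChain R (a :: l) at hc
    change List.IsChain _ (a :: l)
    rw [List.isChain_cons] at hc ⊢
    refine ⟨?_, ih hc.2 fun x hx => hP x (List.mem_cons_of_mem _ hx)⟩
    intro y hy
    exact ⟨hP a List.mem_cons_self,
      hP y (List.mem_cons_of_mem _ (List.mem_of_mem_head? hy)), hc.1 y hy⟩

lemma RTG_to_anchored {α : Type*} {R : α → α → Prop} {a b : α}
    (h : Relation.ReflTransGen R a b) :
    a = b ∨ ∃ t : List α, List.Chain R a (t ++ [b]) := by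
  induction h with
  | refl => exact Or.inl rfl
  | @tail b' c hab hrel ih =>
    right
    rcases ih with rfl | ⟨t, ht⟩
    · exact ⟨[], List.isChain_pair.mpr hrel⟩
    · refine ⟨t ++ [b'], ?_⟩
      rw [show (t ++ [b']) ++ [c] = t ++ b' :: [c] by simp, List.Chain, List.isChain_cons_split]
      exact ⟨ht, List.isChain_pair.mpr hrel⟩

lemma exists_walk {α : Type*} {s : Finset α} {R : α → α → Prop} (hsymm : Symmetric R)
    (hrefl : ∀ x ∈ s, R x x) {a : α} (ha : a ∈ s)
    (hconn : ∀ x ∈ s, Relation.ReflTransGen (fun u v => u ∈ s ∧ v ∈ s ∧ R u v) a x) :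
    ∃ L : List α, (∀ d ∈ s, d ∈ L) ∧ (∀ d ∈ L, d ∈ s) ∧ L.Chain' R := by
  classical
  set R' : α → α → Prop := fun u v => u ∈ s ∧ v ∈ s ∧ R u v with hR'
  have hsymm' : Symmetric R' := fun u v h => ⟨h.2.1, h.1, hsymm h.2.2⟩
  have hmem' : ∀ {l : List α} {x : α}, List.Chain R' x l → ∀ z ∈ l, z ∈ s :=
    fun hc => chain_mem (fun _ _ h => h.2.1) hc
  have hRaa : List.Chain R' a ([] ++ [a]) := by
    simp only [List.nil_append]
    exact List.isChain_pair.mpr ⟨ha, ha, hrefl a ha⟩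
  -- a round trip visiting x
  have trip : ∀ x ∈ s, ∃ t : List α, List.Chain R' a (t ++ [a]) ∧ x ∈ a :: t ∧
      (∀ z ∈ t, z ∈ s) := by
    intro x hx
    rcases RTG_to_anchored (hconn x hx) with rfl | ⟨t₁, ht₁⟩
    · exact ⟨[], hRaa, by simp, by simp⟩
    rcases RTG_to_anchored (letI : Std.Symm R' := ⟨fun _ _ h => hsymm' h⟩; Std.Symm.symm _ _ (hconn x hx)) with
      rfl | ⟨t₂, ht₂⟩
    · exact ⟨[], hRaa, by simp, by simp⟩
    refine ⟨t₁ ++ x :: t₂, ?_, by simp, ?_⟩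
    · rw [show (t₁ ++ x :: t₂) ++ [a] = t₁ ++ x :: (t₂ ++ [a]) by simp, List.Chain, List.isChain_cons_split]
      exact ⟨ht₁, ht₂⟩
    · intro z hz
      rcases List.mem_append.mp hz with hz | hz
      · exact hmem' ht₁ z (by simp [hz])
      · rcases List.mem_cons.mp hz with rfl | hz
        · exact hx
        · exact hmem' ht₂ z (by simp [hz])
  -- accumulate round trips
  have aux : ∀ l : List α, (∀ x ∈ l, x ∈ s) →
      ∃ W : List α, List.Chain R' a (W ++ [a]) ∧ (∀ x ∈ l, x ∈ a :: W) ∧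
        (∀ x ∈ W, x ∈ s) := by
    intro l
    induction l with
    | nil =>
      intro _
      exact ⟨[], by simp only [List.nil_append]; exact List.isChain_pair.mpr ⟨ha, ha, hrefl a ha⟩,
        by simp, by simp⟩
    | cons x l ih =>
      intro hl
      obtain ⟨W, hW, hWcov, hWs⟩ := ih fun z hz => hl z (List.mem_cons_of_mem _ hz)
      obtain ⟨t, ht, htx, hts⟩ := trip x (hl x List.mem_cons_self)
      refine ⟨W ++ a :: t, ?_, ?_, ?_⟩
      · have : (W ++ a :: t) ++ [a] = W ++ a :: (t ++ [a]) := by simp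
        rw [this, List.Chain, List.isChain_cons_split]
        exact ⟨hW, ht⟩
      · intro z hz
        rcases List.mem_cons.mp hz with rfl | hz
        · rcases List.mem_cons.mp htx with h | h
          · exact List.mem_cons.mpr (Or.inl h)
          · refine List.mem_cons.mpr (Or.inr ?_)
            exact List.mem_append.mpr (Or.inr (List.mem_cons_of_mem _ h))
        · have := hWcov z hz
          rcases List.mem_cons.mp this with rfl | h
          · exact List.mem_cons_self
          · exact List.mem_cons.mpr (Or.inr (List.mem_append.mpr (Or.inl h)))
      · intro z hz
        rcases List.mem_append.mp hz with hz | hz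
        · exact hWs z hz
        · rcases List.mem_cons.mp hz with rfl | hz
          · exact ha
          · exact hts z hz
  obtain ⟨W, hW, hWcov, hWs⟩ := aux s.toList (fun x hx => Finset.mem_toList.mp hx)
  refine ⟨a :: (W ++ [a]), ?_, ?_, ?_⟩
  · intro d hd
    have := hWcov d (Finset.mem_toList.mpr hd)
    rcases List.mem_cons.mp this with rfl | h
    · exact List.mem_cons_self
    · exact List.mem_cons.mpr (Or.inr (List.mem_append.mpr (Or.inl h)))
  · intro d hd
    rcases List.mem_cons.mp hd with rfl | hd
    · exact ha
    · exact hmem' hW d hd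
  · have : List.Chain R' a (W ++ [a]) := hW
    have h2 : List.Chain R a (W ++ [a]) := List.IsChain.imp (fun _ _ h => h.2.2) this
    exact h2

lemma conn_of_chains (F : Set (Fin 2 → ℝ)) (hcpt : IsCompact F) (hne : F.Nonempty)
    (h : ∀ ε > (0:ℝ), ∀ x ∈ F, ∀ y ∈ F,
      Relation.ReflTransGen (fun a b => a ∈ F ∧ b ∈ F ∧ dist a b ≤ ε) x y) :
    IsConnected F := by
  refine ⟨hne, ?_⟩
  rintro u v hu hv huv ⟨x, hxF, hxu⟩ ⟨y, hyF, hyv⟩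
  by_contra hempty
  rw [Set.not_nonempty_iff_eq_empty] at hempty
  have h1 : F ∩ u = F ∩ vᶜ := by
    ext z
    constructor
    · rintro ⟨hzF, hzu⟩
      refine ⟨hzF, fun hzv => ?_⟩
      have : z ∈ F ∩ (u ∩ v) := ⟨hzF, hzu, hzv⟩
      rw [hempty] at this
      exact this
    · rintro ⟨hzF, hzv⟩
      rcases huv hzF with hzu | hzv'
      · exact ⟨hzF, hzu⟩
      · exact absurd hzv' hzv
  have h2 : F ∩ v = F ∩ uᶜ := by
    ext z
    constructor
    · rintro ⟨hzF, hzv⟩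
      refine ⟨hzF, fun hzu => ?_⟩
      have : z ∈ F ∩ (u ∩ v) := ⟨hzF, hzu, hzv⟩
      rw [hempty] at this
      exact this
    · rintro ⟨hzF, hzu⟩
      rcases huv hzF with hzu' | hzv
      · exact absurd hzu' hzu
      · exact ⟨hzF, hzv⟩
  have hc1 : IsCompact (F ∩ u) := by
    rw [h1]; exact hcpt.inter_right (isClosed_compl_iff.mpr hv)
  have hc2 : IsCompact (F ∩ v) := by
    rw [h2]; exact hcpt.inter_right (isClosed_compl_iff.mpr hu)
  have hdisj : Disjoint (F ∩ u) (F ∩ v) := by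
    rw [Set.disjoint_iff]
    rintro z ⟨⟨hzF, hzu⟩, ⟨_, hzv⟩⟩
    have : z ∈ F ∩ (u ∩ v) := ⟨hzF, hzu, hzv⟩
    rw [hempty] at this
    exact this
  obtain ⟨δ, hδ, hthick⟩ := hdisj.exists_thickenings hc1 hc2.isClosed
  have hsep : ∀ p ∈ F ∩ u, ∀ q ∈ F ∩ v, δ ≤ dist p q := by
    intro p hp q hq
    by_contra hlt
    push_neg at hlt
    have hq1 : q ∈ Metric.thickening δ (F ∩ u) :=
      Metric.mem_thickening_iff.mpr ⟨p, hp, by rwa [dist_comm] at hlt⟩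
    have hq2 : q ∈ Metric.thickening δ (F ∩ v) :=
      Metric.self_subset_thickening hδ _ hq
    exact (Set.disjoint_iff.mp hthick ⟨hq1, hq2⟩)
  have key : ∀ z, Relation.ReflTransGen
      (fun a b => a ∈ F ∧ b ∈ F ∧ dist a b ≤ δ / 2) x z → z ∈ F → z ∈ u := by
    intro z hz
    induction hz with
    | refl => intro _; exact hxu
    | tail hab hrel ih =>
      intro hcF
      obtain ⟨hbF, hcF', hd⟩ := hrel
      rcases huv hcF with hcu | hcv
      · exact hcu
      · exfalso
        have hbu : _ ∈ u := ih hbF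
        have := hsep _ ⟨hbF, hbu⟩ _ ⟨hcF', hcv⟩
        linarith
  have hyu : y ∈ u := key y (h (δ / 2) (by linarith) x hxF y hyF) hyF
  have : y ∈ F ∩ (u ∩ v) := ⟨hyF, hyu, hyv⟩
  rw [hempty] at this
  exact this

/-- Let `T` be an expanding `2×2` integer matrix and `D ⊂ ℤ²` a finite
digit set, with attractor `F = F(T,D)` (the unique nonempty compact set with
`F = ⋃_{d ∈ D} T⁻¹(F + d)`).  Then `F` is connected iff `D` can be arranged into a finite
sequence `t₁, …, t_s` of elements of `D`, containing every element of `D`, whose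
consecutive differences `tᵢ - tᵢ₊₁` all lie in `F - F`. -/
theorem stmt9 (T : Matrix (Fin 2) (Fin 2) ℤ) (hT : IsExpanding T)
    (D : Finset (Fin 2 → ℤ)) (hD : D.Nonempty)
    (F : Set (Fin 2 → ℝ)) (hne : F.Nonempty) (hcpt : IsCompact F)
    (hfix : F = ⋃ d ∈ D,
      (fun x => (T.map (fun a => (a : ℝ)))⁻¹ *ᵥ (x + castVec d)) '' F) :
    IsConnected F ↔
      ∃ L : List (Fin 2 → ℤ), (∀ d ∈ D, d ∈ L) ∧ (∀ d ∈ L, d ∈ D) ∧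
        L.Chain' (fun a b => castVec (a - b) ∈ F - F) := by
  classical
  obtain ⟨hdet, σ', hσ'0, hσ'1, n₀', hn₀', hcon'⟩ := exists_contracting_power T hT
  set A : Matrix (Fin 2) (Fin 2) ℝ := (T.map (fun a => (a : ℝ)))⁻¹ with hA
  set f : (Fin 2 → ℤ) → (Fin 2 → ℝ) → (Fin 2 → ℝ) := fun d x => A *ᵥ (x + castVec d) with hf
  have hfix' : F = ⋃ d ∈ D, f d '' F := hfix
  have piece_sub : ∀ d ∈ D, f d '' F ⊆ F := by
    intro d hd z hz
    rw [hfix']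
    exact Set.mem_biUnion hd hz
  have cover : ∀ x ∈ F, ∃ d ∈ D, ∃ y ∈ F, f d y = x := by
    intro x hx
    rw [hfix'] at hx
    simpa using hx
  have castVec_sub : ∀ a b : Fin 2 → ℤ, castVec (a - b) = castVec a - castVec b := by
    intro a b
    funext i
    simp only [castVec, Pi.sub_apply]
    push_cast
    ring
  have hdiff : ∀ (d : Fin 2 → ℤ) (u v : Fin 2 → ℝ), f d u - f d v = A *ᵥ (u - v) := by
    intro d u v
    rw [hf]
    simp only
    rw [← Matrix.mulVec_sub]
    congr 1
    abel
  have hTA : (T.map (fun a => (a : ℝ))) * A = 1 :=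
    Matrix.mul_nonsing_inv _ (isUnit_iff_ne_zero.mpr hdet)
  have hinj : ∀ u v : Fin 2 → ℝ, A *ᵥ u = A *ᵥ v → u = v := by
    intro u v h
    have e : ∀ w : Fin 2 → ℝ, (T.map (fun a => (a : ℝ))) *ᵥ (A *ᵥ w) = w := by
      intro w
      rw [Matrix.mulVec_mulVec, hTA, Matrix.one_mulVec]
    rw [← e u, ← e v, h]
  constructor
  · -- F connected → walk exists
    intro hconn
    set R : (Fin 2 → ℤ) → (Fin 2 → ℤ) → Prop :=
      fun d e => ((f d '' F) ∩ (f e '' F)).Nonempty with hR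
    have hRsymm : Symmetric R := by
      rintro d e ⟨z, hz1, hz2⟩
      exact ⟨z, hz2, hz1⟩
    have hRrefl : ∀ d ∈ D, R d d := by
      intro d _
      obtain ⟨x, hx⟩ := hne
      exact ⟨f d x, ⟨x, hx, rfl⟩, ⟨x, hx, rfl⟩⟩
    have hconv : ∀ d e, R d e → castVec (d - e) ∈ F - F := by
      rintro d e ⟨z, ⟨u, hu, huz⟩, ⟨v, hv, hvz⟩⟩
      have : u + castVec d = v + castVec e := by
        apply hinj
        rw [show A *ᵥ (u + castVec d) = f d u from rfl, show A *ᵥ (v + castVec e) = f e v from rfl,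
          huz, hvz]
      have hveq : v - u = castVec (d - e) := by
        rw [castVec_sub]
        rw [show castVec d - castVec e = (u + castVec d) - u - castVec e from by abel, this]
        abel
      rw [← hveq]
      exact Set.sub_mem_sub hv hu
    obtain ⟨a, haD⟩ := hD
    set R' : (Fin 2 → ℤ) → (Fin 2 → ℤ) → Prop :=
      fun u v => u ∈ D ∧ v ∈ D ∧ R u v with hR'
    -- continuity and compactness of the pieces
    have hcontA : Continuous fun x : Fin 2 → ℝ => A *ᵥ x := by
      have h1 := LinearMap.continuous_of_finiteDimensional (Matrix.mulVecLin A)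
      have h2 : ⇑(Matrix.mulVecLin A) = fun x : Fin 2 → ℝ => A *ᵥ x := by
        funext x
        simp [Matrix.mulVecLin_apply]
      rwa [h2] at h1
    have hcont : ∀ d, Continuous (f d) := by
      intro d
      exact hcontA.comp (continuous_id.add continuous_const)
    have hpiece_cpt : ∀ d, IsCompact (f d '' F) := fun d => hcpt.image (hcont d)
    -- reachability of all digits
    have hreach : ∀ e ∈ D, Relation.ReflTransGen R' a e := by
      by_contra hnot
      push_neg at hnot
      obtain ⟨e₀, he₀D, he₀⟩ := hnot
      set S : Finset (Fin 2 → ℤ) := D.filter (fun e => Relation.ReflTransGen R' a e) with hS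
      set Sc : Finset (Fin 2 → ℤ) := D.filter (fun e => ¬ Relation.ReflTransGen R' a e) with hSc
      set U : Set (Fin 2 → ℝ) := ⋃ d ∈ S, f d '' F with hU
      set V : Set (Fin 2 → ℝ) := ⋃ d ∈ Sc, f d '' F with hV
      have hUc : IsClosed U :=
        Set.Finite.isClosed_biUnion S.finite_toSet (fun d _ => (hpiece_cpt d).isClosed)
      have hVc : IsClosed V :=
        Set.Finite.isClosed_biUnion Sc.finite_toSet (fun d _ => (hpiece_cpt d).isClosed)
      have hFUV : F ⊆ U ∪ V := by
        intro x hx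
        obtain ⟨d, hd, y, hy, rfl⟩ := cover x hx
        by_cases hdr : Relation.ReflTransGen R' a d
        · exact Or.inl (Set.mem_biUnion (Finset.mem_filter.mpr ⟨hd, hdr⟩) ⟨y, hy, rfl⟩)
        · exact Or.inr (Set.mem_biUnion (Finset.mem_filter.mpr ⟨hd, hdr⟩) ⟨y, hy, rfl⟩)
      obtain ⟨x₀, hx₀⟩ := hne
      have hFU : (F ∩ U).Nonempty := by
        refine ⟨f a x₀, piece_sub a haD ⟨x₀, hx₀, rfl⟩, ?_⟩
        exact Set.mem_biUnion (Finset.mem_filter.mpr ⟨haD, Relation.ReflTransGen.refl⟩)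
          ⟨x₀, hx₀, rfl⟩
      have hFV : (F ∩ V).Nonempty := by
        refine ⟨f e₀ x₀, piece_sub e₀ he₀D ⟨x₀, hx₀, rfl⟩, ?_⟩
        exact Set.mem_biUnion (Finset.mem_filter.mpr ⟨he₀D, he₀⟩) ⟨x₀, hx₀, rfl⟩
      obtain ⟨z, hzF, hzU, hzV⟩ :=
        isPreconnected_closed_iff.mp hconn.isPreconnected U V hUc hVc hFUV hFU hFV
      obtain ⟨d, hdS, hzd⟩ := Set.mem_iUnion₂.mp hzU
      obtain ⟨e, heS, hze⟩ := Set.mem_iUnion₂.mp hzV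
      have hdD := (Finset.mem_filter.mp hdS).1
      have hdr := (Finset.mem_filter.mp hdS).2
      have heD := (Finset.mem_filter.mp heS).1
      have her := (Finset.mem_filter.mp heS).2
      exact her (hdr.tail ⟨hdD, heD, ⟨z, hzd, hze⟩⟩)
    obtain ⟨L, hLcov, hLmem, hLchain⟩ := exists_walk hRsymm hRrefl haD hreach
    exact ⟨L, hLcov, hLmem, hLchain.imp hconv⟩
  · -- walk exists → F connected
    rintro ⟨L, hLcov, hLmem, hLchain⟩
    obtain ⟨N, ρ, c, hρ0, hρ1, hNlow, hNup, hNadd, hNneg, hNcon⟩ := exists_good_norm T hT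
    have hc1 : (1 : ℝ) ≤ c := by
      have h1 : ‖(fun _ => (1:ℝ) : Fin 2 → ℝ)‖ = 1 := norm_one
      have := (hNlow (fun _ => (1:ℝ))).trans (hNup (fun _ => (1:ℝ)))
      rw [h1] at this
      linarith
    obtain ⟨r, hFr⟩ := hcpt.isBounded.subset_closedBall 0
    have hrF : ∀ z ∈ F, ‖z‖ ≤ r := by
      intro z hz
      have := hFr hz
      rwa [Metric.mem_closedBall, dist_zero_right] at this
    have hr0 : 0 ≤ r := by
      obtain ⟨z, hz⟩ := hne
      exact (norm_nonneg z).trans (hrF z hz)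
    set B : ℝ := c * (r + r) with hB
    have hNB : ∀ x ∈ F, ∀ y ∈ F, N (x - y) ≤ B := by
      intro x hx y hy
      calc N (x - y) ≤ c * ‖x - y‖ := hNup _
      _ ≤ c * (r + r) := by
          apply mul_le_mul_of_nonneg_left ?_ (by linarith)
          calc ‖x - y‖ ≤ ‖x‖ + ‖y‖ := norm_sub_le _ _
          _ ≤ r + r := add_le_add (hrF x hx) (hrF y hy)
    have hNsub : ∀ a b : Fin 2 → ℝ, N (a - b) = N (b - a) := by
      intro a b
      rw [← hNneg (a - b), neg_sub]
    set rel : ℝ → (Fin 2 → ℝ) → (Fin 2 → ℝ) → Prop :=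
      fun ε a b => a ∈ F ∧ b ∈ F ∧ N (a - b) ≤ ε with hrel
    set adjD : (Fin 2 → ℤ) → (Fin 2 → ℤ) → Prop :=
      fun d e => d ∈ D ∧ e ∈ D ∧ castVec (d - e) ∈ F - F with hadjD
    have hadjsymm : Symmetric adjD := by
      rintro d e ⟨hd, he, hsub⟩
      refine ⟨he, hd, ?_⟩
      obtain ⟨u, hu, v, hv, huv⟩ := Set.mem_sub.mp hsub
      refine Set.mem_sub.mpr ⟨v, hv, u, hu, ?_⟩
      rw [castVec_sub] at huv ⊢
      rw [← neg_sub u v, huv]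
      abel
    have hLadj : L.Chain' adjD := by
      have := chain'_strengthen L hLchain hLmem
      exact this.imp fun a b h => ⟨h.1, h.2.1, h.2.2⟩
    have hDreach : ∀ d ∈ D, ∀ e ∈ D, Relation.ReflTransGen adjD d e := by
      intro d hd e he
      exact chain'_reachable hadjsymm L hLadj (hLcov d hd) (hLcov e he)
    have cross : ∀ d e, adjD d e → ∃ u ∈ F, ∃ v ∈ F, f d v = f e u := by
      rintro d e ⟨hd, he, hsub⟩
      obtain ⟨u, hu, v, hv, huv⟩ := Set.mem_sub.mp hsub
      refine ⟨u, hu, v, hv, ?_⟩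
      rw [hf]
      simp only
      congr 1
      rw [castVec_sub] at huv
      rw [show u + castVec e = u - v + v + castVec e from by abel, huv]
      abel
    have maplem : ∀ (ε : ℝ) (t : Fin 2 → ℤ), t ∈ D → ∀ z w : Fin 2 → ℝ,
        Relation.ReflTransGen (rel ε) z w →
        Relation.ReflTransGen (rel (ρ * ε)) (f t z) (f t w) := by
      intro ε t ht z w hzw
      induction hzw with
      | refl => exact Relation.ReflTransGen.refl
      | tail hab hrel ih =>
        refine ih.tail ?_
        obtain ⟨hbF, hcF, hd⟩ := hrel
        refine ⟨piece_sub t ht ⟨_, hbF, rfl⟩, piece_sub t ht ⟨_, hcF, rfl⟩, ?_⟩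
        rw [hdiff]
        calc N (A *ᵥ (_ - _)) ≤ ρ * N (_ - _) := hNcon _
        _ ≤ ρ * ε := mul_le_mul_of_nonneg_left hd hρ0.le
    have main : ∀ n : ℕ, ∀ x ∈ F, ∀ y ∈ F,
        Relation.ReflTransGen (rel (ρ ^ n * B)) x y := by
      intro n
      induction n with
      | zero =>
        intro x hx y hy
        refine Relation.ReflTransGen.single ⟨hx, hy, ?_⟩
        rw [pow_zero, one_mul]
        exact hNB x hx y hy
      | succ n ih =>
        intro x hx y hy
        obtain ⟨d, hd, x', hx', hfx⟩ := cover x hx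
        obtain ⟨e, he, y', hy', hfy⟩ := cover y hy
        have hpow : ρ ^ (n + 1) * B = ρ * (ρ ^ n * B) := by ring
        have claim : ∀ t, Relation.ReflTransGen adjD d t → t ∈ D → ∀ q ∈ F,
            Relation.ReflTransGen (rel (ρ ^ (n + 1) * B)) (f d x') (f t q) := by
          intro t ht
          induction ht with
          | refl =>
            intro _ q hq
            rw [hpow]
            exact maplem (ρ ^ n * B) d hd x' q (ih x' hx' q hq)
          | @tail b c hdb hbc ihc =>
            intro hcD q hq
            obtain ⟨u, hu, v, hv, heq⟩ := cross b c hbc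
            have h1 := ihc hbc.1 v hv
            rw [heq] at h1
            refine h1.trans ?_
            rw [hpow]
            exact maplem (ρ ^ n * B) c hcD u q (ih u hu q hq)
        have := claim e (hDreach d hd e he) he y' hy'
        rw [hfy] at this
        rw [← hfx]
        exact this
    apply conn_of_chains F hcpt hne
    intro ε hε x hx y hy
    have htend : Filter.Tendsto (fun n : ℕ => ρ ^ n * B) Filter.atTop (nhds 0) := by
      have := tendsto_pow_atTop_nhds_zero_of_lt_one hρ0.le hρ1
      simpa using this.mul_const B
    obtain ⟨n, hn⟩ := (htend.eventually_lt_const hε).exists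
    refine Relation.ReflTransGen.mono ?_ x y (main n x hx y hy)
    rintro a b ⟨haF, hbF, hab⟩
    refine ⟨haF, hbF, ?_⟩
    rw [dist_eq_norm]
    exact ((hNlow (a - b)).trans hab).trans hn.le
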